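/- Remark 1.4 (connected subcurves suffice to compute ε(X)): the essential connectivity ε(X) equals the infimum in ℕ ∪ {∞} of k_Z over all nonempty proper subsets Z ⊆ V such that the subgraph of G induced on Z is connected and some pair (i, j) with i ∈ Z, j ∉ Z and m i j > 0 is not separating. -/

import Mathlib

open Finset

variable {V : Type*}

/-- The multidegree of a divisor `D` on the nodal curve with dual multigraph `m`:
`(deg D) j = ∑ i, (D i - D j) * m i j`. -/
def mdeg [Fintype V] (m : V → V → ℕ) (D : V → ℤ) : V → ℤ :=
  fun j => ∑ i, (D i - D j) * (m i j : ℤ)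

/-- `k_Z`: the number of nodes where the subcurve `Z` meets its complementary curve. -/
def kdeg [Fintype V] [DecidableEq V] (m : V → V → ℕ) (Z : Finset V) : ℕ :=
  ∑ i ∈ Z, ∑ j ∈ Zᶜ, m i j

/-- The pair `(i, j)` (with `m i j > 0`) corresponds to a separating node:
`m i j = 1` and the edge `{i, j}` is a bridge of `G`. -/
def Separating (m : V → V → ℕ) (G : SimpleGraph V) (i j : V) : Prop :=
  m i j = 1 ∧ G.IsBridge s(i, j)

/-- A tail: a nonempty proper subcurve meeting its complement in a single node. -/
def IsTail [Fintype V] [DecidableEq V] (m : V → V → ℕ) (Q : Finset V) : Prop :=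
  Q.Nonempty ∧ Q ≠ Finset.univ ∧ kdeg m Q = 1

/-- A divisor is a sum of tails if `D = c·1_V + ∑ h a_h · 1_{Q_h}` with the `Q_h` tails. -/
def SumOfTails [Fintype V] [DecidableEq V] (m : V → V → ℕ) (D : V → ℤ) : Prop :=
  ∃ (c : ℤ) (k : ℕ) (a : Fin k → ℤ) (Q : Fin k → Finset V),
    (∀ h, IsTail m (Q h)) ∧
    ∀ i, D i = c + ∑ h, a h * (if i ∈ Q h then 1 else 0)

/-- `Λ_X`: the group of multidegrees of twisters, i.e. the image of `mdeg`. -/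
def Lambda [Fintype V] (m : V → V → ℕ) : Set (V → ℤ) := Set.range (mdeg m)

/-- `Λ_X^0`: multidegrees of sums of tails. -/
def Lambda0 [Fintype V] [DecidableEq V] (m : V → V → ℕ) : Set (V → ℤ) :=
  {t | ∃ D, SumOfTails m D ∧ mdeg m D = t}

/-- The essential connectivity `ε(X)`: the infimum of `k_Z` over nonempty proper `Z ⊆ V`
such that some pair `(i,j)` with `i ∈ Z`, `j ∉ Z`, `m i j > 0` is not separating. -/
noncomputable def eps [Fintype V] [DecidableEq V] (m : V → V → ℕ) (G : SimpleGraph V) : ℕ∞ :=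
  sInf ((fun Z : Finset V => (kdeg m Z : ℕ∞)) ''
    {Z | Z.Nonempty ∧ Z ≠ Finset.univ ∧
      ∃ i ∈ Z, ∃ j, j ∉ Z ∧ 0 < m i j ∧ ¬ Separating m G i j})


lemma walk_reachable_induce {G G' : SimpleGraph V} {W : Set V}
    (hle : ∀ a b, G'.Adj a b → G.Adj a b)
    (hclosed : ∀ a b, a ∈ W → G'.Adj a b → b ∈ W) :
    ∀ {u v : V} (_ : G'.Walk u v) (hu : u ∈ W) (hv : v ∈ W),
      (G.induce W).Reachable ⟨u, hu⟩ ⟨v, hv⟩ := by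
  intro u v p
  induction p with
  | nil => intro hu hv; exact SimpleGraph.Reachable.refl _
  | @cons u b v h p ih =>
    intro hu hv
    have hb : b ∈ W := hclosed _ _ hu h
    have hadj : (G.induce W).Adj ⟨u, hu⟩ ⟨b, hb⟩ := by
      simp only [SimpleGraph.comap_adj, Function.Embedding.coe_subtype]
      exact hle _ _ h
    exact hadj.reachable.trans (ih hb hv)

/-- Remark 1.4: connected subcurves suffice to compute the essential connectivity `ε(X)`. -/
theorem eps_via_connected_subcurves [Fintype V] [DecidableEq V] [Nonempty V]
    (m : V → V → ℕ) (hsym : ∀ i j, m i j = m j i) (hdiag : ∀ i, m i i = 0)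
    (G : SimpleGraph V) (hG : ∀ i j, G.Adj i j ↔ i ≠ j ∧ 0 < m i j)
    (hconn : G.Connected) :
    eps m G = sInf ((fun Z : Finset V => (kdeg m Z : ℕ∞)) ''
      {Z | Z.Nonempty ∧ Z ≠ Finset.univ ∧ (G.induce (↑Z : Set V)).Connected ∧
        ∃ i ∈ Z, ∃ j, j ∉ Z ∧ 0 < m i j ∧ ¬ Separating m G i j}) := by
  classical
  apply le_antisymm
  · apply sInf_le_sInf
    apply Set.image_mono
    rintro Z ⟨h1, h2, _, h4⟩
    exact ⟨h1, h2, h4⟩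
  · apply le_sInf
    rintro b ⟨Z, ⟨hZne, hZuniv, i, hiZ, j, hjZ, hmij, hnsep⟩, rfl⟩
    -- restricted graph on Z
    set G' : SimpleGraph V :=
      { Adj := fun a b => G.Adj a b ∧ a ∈ Z ∧ b ∈ Z
        symm := ⟨fun a b ⟨h, ha, hb⟩ => ⟨h.symm, hb, ha⟩⟩
        loopless := ⟨fun a ⟨h, _, _⟩ => G.loopless.irrefl a h⟩ } with hG'
    set W : Finset V := Finset.univ.filter (fun v => G'.Reachable i v) with hWdef
    have hW : ∀ v, v ∈ W ↔ G'.Reachable i v := by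
      intro v; simp [hWdef]
    have hiW : i ∈ W := (hW i).mpr (SimpleGraph.Reachable.refl i)
    have hle : ∀ a b, G'.Adj a b → G.Adj a b := fun a b h => h.1
    have hclosedF : ∀ a b, a ∈ W → G'.Adj a b → b ∈ W := fun a b ha h =>
      (hW b).mpr (((hW a).mp ha).trans h.reachable)
    have hWZ : ∀ v, v ∈ W → v ∈ Z := by
      have key : ∀ {u v : V}, G'.Walk u v → u ∈ Z → v ∈ Z := by
        intro u v p
        induction p with
        | nil => exact id
        | cons h _ ih => exact fun _ => ih h.2.2
      intro v hv
      rcases (hW v).mp hv with ⟨p⟩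
      exact key p hiZ
    have hjW : j ∉ W := fun h => hjZ (hWZ j h)
    -- no edges from W to Z \ W
    have hnoedge : ∀ a b, a ∈ W → b ∈ Z → b ∉ W → m a b = 0 := by
      intro a b ha hbZ hbW
      by_contra h
      have hab : a ≠ b := fun e => by subst e; exact h (hdiag a)
      have : G'.Adj a b := ⟨(hG a b).mpr ⟨hab, Nat.pos_of_ne_zero h⟩, hWZ a ha, hbZ⟩
      exact hbW (hclosedF a b ha this)
    have hclosed : ∀ a b : V, a ∈ (↑W : Set V) → G'.Adj a b → b ∈ (↑W : Set V) := by
      intro a b ha h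
      exact Finset.mem_coe.mpr (hclosedF a b (Finset.mem_coe.mp ha) h)
    -- connectivity of induced graph on W
    have hiW' : i ∈ (↑W : Set V) := Finset.mem_coe.mpr hiW
    have hWconn : (G.induce (↑W : Set V)).Connected := by
      rw [SimpleGraph.connected_iff_exists_forall_reachable]
      refine ⟨⟨i, hiW'⟩, ?_⟩
      rintro ⟨v, hv⟩
      rcases (hW v).mp (Finset.mem_coe.mp hv) with ⟨pv⟩
      exact walk_reachable_induce hle hclosed pv hiW' hv
    -- k_W ≤ k_Z
    have hk : kdeg m W ≤ kdeg m Z := by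
      unfold kdeg
      have hstep : ∀ a ∈ W, ∑ x ∈ Wᶜ, m a x = ∑ x ∈ Zᶜ, m a x := by
        intro a ha
        refine (Finset.sum_subset ?_ ?_).symm
        · intro x hx
          simp only [Finset.mem_compl] at hx ⊢
          exact fun h => hx (hWZ x h)
        · intro x hxW hxZ
          simp only [Finset.mem_compl] at hxW hxZ
          exact hnoedge a x ha (not_not.mp hxZ) hxW
      rw [Finset.sum_congr rfl hstep]
      exact Finset.sum_le_sum_of_subset (fun v hv => hWZ v hv)
    show sInf _ ≤ (kdeg m Z : ℕ∞)
    refine le_trans (sInf_le ?_) (Nat.cast_le.mpr hk)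
    exact ⟨W, ⟨⟨i, hiW⟩, fun h => hjW (h ▸ Finset.mem_univ j), hWconn,
      i, hiW, j, hjW, hmij, hnsep⟩, rfl⟩
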